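/- Let $d > 0$, $A > 0$, $M > 0$ and set $\varphi = \min\{A, M\}$. Let $\mu$ be the Gaussian measure $N(0,1)$ on $\mathbb{R}$ and $\nu$ the Gaussian measure $N(0, d^2)$ on $\mathbb{R}$, and let $\mu \otimes \nu$ be their product. Then $(\mu \otimes \nu)\big(\{(e, h) \in \mathbb{R}^2 : |e + h| \le A \text{ and } |h| \le M\}\big) \;\ge\; e^{-AM}\,\frac{d}{d^2 + 1}\left(1 - \exp\!\left(-\frac{d^2+1}{2 d^2}\,\varphi^2\right)\right).$ -/

import Mathlib

open MeasureTheory ProbabilityTheory Real Set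
open scoped NNReal

lemma sq_le_sq_iff_abs {x c : ℝ} (hc : 0 < c) (h : x ^ 2 ≤ c ^ 2) : -c ≤ x ∧ x ≤ c := by
  constructor <;> nlinarith

lemma radial_integral (b c0 φ : ℝ) (hb : 0 < b) (hφ : 0 < φ) :
    ∫ r in Set.Ioi (0:ℝ),
        Set.indicator (Set.Iic φ) (fun r => r * (c0 * Real.exp (-b * r ^ 2))) r
      = c0 / (2 * b) * (1 - Real.exp (-b * φ ^ 2)) := by
  rw [setIntegral_indicator measurableSet_Iic, Set.Ioi_inter_Iic,
    ← intervalIntegral.integral_of_le hφ.le]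
  have hderiv : ∀ x ∈ Set.uIcc (0:ℝ) φ,
      HasDerivAt (fun r => -(c0 / (2 * b)) * Real.exp (-b * r ^ 2))
        (x * (c0 * Real.exp (-b * x ^ 2))) x := by
    intro x _
    have h1 : HasDerivAt (fun r : ℝ => -b * r ^ 2) (-b * (2 * x)) x := by
      simpa using (hasDerivAt_pow 2 x).const_mul (-b)
    have h2 := (h1.exp).const_mul (-(c0 / (2 * b)))
    refine h2.congr_deriv ?_
    field_simp
  have hcont : IntervalIntegrable (fun r : ℝ => r * (c0 * Real.exp (-b * r ^ 2)))
      volume 0 φ := by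
    apply Continuous.intervalIntegrable
    fun_prop
  rw [intervalIntegral.integral_eq_sub_of_hasDerivAt hderiv hcont]
  norm_num
  ring

lemma disk_integral (b c0 φ : ℝ) (hb : 0 < b) (hφ : 0 < φ) :
    ∫ p : ℝ × ℝ, Set.indicator {p : ℝ × ℝ | p.1 ^ 2 + p.2 ^ 2 ≤ φ ^ 2}
        (fun p => c0 * Real.exp (-b * (p.1 ^ 2 + p.2 ^ 2))) p
      = Real.pi * c0 / b * (1 - Real.exp (-b * φ ^ 2)) := by
  rw [← integral_comp_polarCoord_symm]
  have htarget : polarCoord.target = Set.Ioi (0:ℝ) ×ˢ Set.Ioo (-π) π := rfl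
  rw [htarget]
  have hcongr : ∀ p ∈ Set.Ioi (0:ℝ) ×ˢ Set.Ioo (-π) π,
      p.1 • Set.indicator {p : ℝ × ℝ | p.1 ^ 2 + p.2 ^ 2 ≤ φ ^ 2}
          (fun p => c0 * Real.exp (-b * (p.1 ^ 2 + p.2 ^ 2))) (polarCoord.symm p)
        = (Set.indicator (Set.Iic φ) (fun r => r * (c0 * Real.exp (-b * r ^ 2))) p.1)
            * (fun _ : ℝ => (1:ℝ)) p.2 := by
    rintro ⟨r, θ⟩ ⟨hr, -⟩
    simp only [Set.mem_Ioi] at hr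
    have hsq : (r * Real.cos θ) ^ 2 + (r * Real.sin θ) ^ 2 = r ^ 2 := by
      have := Real.sin_sq_add_cos_sq θ
      nlinarith [this]
    simp only [polarCoord_symm_apply, Set.indicator_apply, Set.mem_setOf_eq, Set.mem_Iic,
      smul_eq_mul, mul_one, hsq]
    split_ifs with h1 h2 h3
    · ring
    · exfalso; nlinarith
    · exfalso; nlinarith
    · ring
  rw [setIntegral_congr_fun (by measurability) hcongr, Measure.volume_eq_prod,
    setIntegral_prod_mul (f := fun r : ℝ => Set.indicator (Set.Iic φ)
      (fun r => r * (c0 * Real.exp (-b * r ^ 2))) r) (g := fun _ : ℝ => (1:ℝ)),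
    radial_integral b c0 φ hb hφ]
  simp only [integral_const, MeasurableSet.univ, Measure.restrict_apply, Set.univ_inter,
    Real.volume_Ioo, smul_eq_mul, mul_one]
  rw [Measure.real, Measure.restrict_apply MeasurableSet.univ, Set.univ_inter, Real.volume_Ioo, ENNReal.toReal_ofReal (by linarith [Real.pi_pos] : (0:ℝ) ≤ π - -π)]
  field_simp
  ring

lemma expo_bound (d A M e h : ℝ) (hd : 0 < d) (hA : 0 < A) (hM : 0 < M)
    (h1 : (e + h) ^ 2 ≤ A ^ 2) (h2 : h ^ 2 ≤ M ^ 2) :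
    -(A * M) + -((d ^ 2 + 1) / (2 * d ^ 2)) * ((e + h) ^ 2 + h ^ 2)
      ≤ -e ^ 2 / 2 + -h ^ 2 / (2 * d ^ 2) := by
  have key2 : d ^ 2 * e ^ 2 + h ^ 2
      ≤ 2 * d ^ 2 * (A * M) + (d ^ 2 + 1) * ((e + h) ^ 2 + h ^ 2) := by
    have hsh : -(A * M) ≤ (e + h) * h := by
      nlinarith [sq_nonneg (A * M + (e + h) * h),
        mul_le_mul h1 h2 (sq_nonneg h) (by positivity : (0:ℝ) ≤ A ^ 2), mul_pos hA hM]
    nlinarith [mul_nonneg (by positivity : (0:ℝ) ≤ 2 * d ^ 2)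
      (by linarith : (0:ℝ) ≤ A * M + (e + h) * h), sq_nonneg (e + h)]
  have hdiff : -e ^ 2 / 2 + -h ^ 2 / (2 * d ^ 2)
      - (-(A * M) + -((d ^ 2 + 1) / (2 * d ^ 2)) * ((e + h) ^ 2 + h ^ 2))
      = (2 * d ^ 2 * (A * M) + (d ^ 2 + 1) * ((e + h) ^ 2 + h ^ 2)
          - (d ^ 2 * e ^ 2 + h ^ 2)) / (2 * d ^ 2) := by
    field_simp
    ring
  have hnn : (0:ℝ) ≤ (2 * d ^ 2 * (A * M) + (d ^ 2 + 1) * ((e + h) ^ 2 + h ^ 2)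
      - (d ^ 2 * e ^ 2 + h ^ 2)) / (2 * d ^ 2) :=
    div_nonneg (by linarith) (by positivity)
  rw [← hdiff] at hnn
  linarith

set_option maxHeartbeats 1000000 in
/-- Proposition 3: when `ε ~ N(0,1)` and `η ~ N(0, d²)` are independent, the
probability of the selection set `{|ε + η| ≤ A, |η| ≤ M}` is at least
`e^{-AM} · d/(d²+1) · (1 - exp(-((d²+1)/(2d²)) φ²))` with `φ = min A M`. -/
theorem gaussian_selection_set_lower_bound
    (d A M : ℝ) (hd : 0 < d) (hA : 0 < A) (hM : 0 < M) :
    ENNReal.ofReal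
        (Real.exp (-(A * M)) * (d / (d ^ 2 + 1)) *
          (1 - Real.exp (-((d ^ 2 + 1) / (2 * d ^ 2)) * (min A M) ^ 2))) ≤
      ((gaussianReal 0 1).prod (gaussianReal 0 ⟨d ^ 2, sq_nonneg d⟩))
        {q : ℝ × ℝ | |q.1 + q.2| ≤ A ∧ |q.2| ≤ M} := by
  have hπ := Real.pi_pos
  set v : ℝ≥0 := ⟨d ^ 2, sq_nonneg d⟩ with hv_def
  have hv : v ≠ 0 := by
    intro h
    have := congrArg NNReal.toReal h
    simp only [hv_def, NNReal.coe_mk, NNReal.coe_zero] at this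
    change d ^ 2 = 0 at this
    nlinarith
  set φ : ℝ := min A M with hφ_def
  have hφ : 0 < φ := lt_min hA hM
  set b : ℝ := (d ^ 2 + 1) / (2 * d ^ 2) with hb_def
  have hb : 0 < b := by positivity
  set c0 : ℝ := Real.exp (-(A * M)) * (2 * Real.pi * d)⁻¹ with hc0_def
  have hc0 : 0 < c0 := by positivity
  set S : Set (ℝ × ℝ) := {q : ℝ × ℝ | |q.1 + q.2| ≤ A ∧ |q.2| ≤ M} with hS_def
  set S' : Set (ℝ × ℝ) := {p : ℝ × ℝ | (p.1 + p.2) ^ 2 + p.2 ^ 2 ≤ φ ^ 2} with hS'_def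
  set D : Set (ℝ × ℝ) := {p : ℝ × ℝ | p.1 ^ 2 + p.2 ^ 2 ≤ φ ^ 2} with hD_def
  set ρ : ℝ × ℝ → ℝ := fun p => c0 * Real.exp (-b * ((p.1 + p.2) ^ 2 + p.2 ^ 2)) with hρ_def
  set fD : ℝ × ℝ → ℝ :=
    Set.indicator D (fun p => c0 * Real.exp (-b * (p.1 ^ 2 + p.2 ^ 2))) with hfD_def
  -- measurability and compactness facts
  have hS : MeasurableSet S := by
    have : S = {q : ℝ × ℝ | |q.1 + q.2| ≤ A} ∩ {q : ℝ × ℝ | |q.2| ≤ M} := rfl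
    rw [this]
    exact ((isClosed_le (by fun_prop) continuous_const).inter
      (isClosed_le (by fun_prop) continuous_const)).measurableSet
  have hS'cl : IsClosed S' := isClosed_le (by fun_prop) continuous_const
  have hS'm : MeasurableSet S' := hS'cl.measurableSet
  have hS'cpt : IsCompact S' := by
    refine (isCompact_Icc.prod isCompact_Icc :
      IsCompact (Set.Icc (-(2 * φ)) (2 * φ) ×ˢ Set.Icc (-φ) φ)).of_isClosed_subset hS'cl ?_
    rintro ⟨e, h⟩ hp
    simp only [hS'_def, Set.mem_setOf_eq] at hp
    have h1 := sq_le_sq_iff_abs hφ (by nlinarith : (e + h) ^ 2 ≤ φ ^ 2)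
    have h2 := sq_le_sq_iff_abs hφ (by nlinarith : h ^ 2 ≤ φ ^ 2)
    exact ⟨Set.mem_Icc.2 ⟨by linarith [h1.1, h2.2], by linarith [h1.2, h2.1]⟩, Set.mem_Icc.2 h2⟩
  have hDcl : IsClosed D := isClosed_le (by fun_prop) continuous_const
  have hDm : MeasurableSet D := hDcl.measurableSet
  have hDcpt : IsCompact D := by
    refine (isCompact_Icc.prod isCompact_Icc :
      IsCompact (Set.Icc (-φ) φ ×ˢ Set.Icc (-φ) φ)).of_isClosed_subset hDcl ?_
    rintro ⟨e, h⟩ hp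
    simp only [hD_def, Set.mem_setOf_eq] at hp
    have h1 := sq_le_sq_iff_abs hφ (by nlinarith : e ^ 2 ≤ φ ^ 2)
    have h2 := sq_le_sq_iff_abs hφ (by nlinarith : h ^ 2 ≤ φ ^ 2)
    exact ⟨Set.mem_Icc.2 h1, Set.mem_Icc.2 h2⟩
  have hρcont : Continuous ρ := by fun_prop
  have hintS' : IntegrableOn ρ S' volume := hρcont.continuousOn.integrableOn_compact hS'cpt
  have hint1 : Integrable (Set.indicator S' ρ) (volume : Measure (ℝ × ℝ)) :=
    (integrable_indicator_iff hS'm).2 hintS'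
  have hint2 : Integrable fD (volume : Measure (ℝ × ℝ)) :=
    (integrable_indicator_iff hDm).2
      ((by fun_prop : Continuous fun p : ℝ × ℝ =>
        c0 * Real.exp (-b * (p.1 ^ 2 + p.2 ^ 2))).continuousOn.integrableOn_compact hDcpt)
  -- the subset relation
  have hsub : S' ⊆ S := by
    rintro ⟨e, h⟩ hp
    simp only [hS'_def, Set.mem_setOf_eq] at hp
    have hφA : φ ≤ A := min_le_left A M
    have hφM : φ ≤ M := min_le_right A M
    have h1 := sq_le_sq_iff_abs hφ (by nlinarith : (e + h) ^ 2 ≤ φ ^ 2)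
    have h2 := sq_le_sq_iff_abs hφ (by nlinarith : h ^ 2 ≤ φ ^ 2)
    exact ⟨abs_le.2 ⟨by linarith [h1.1], by linarith [h1.2]⟩,
      abs_le.2 ⟨by linarith [h2.1], by linarith [h2.2]⟩⟩
  -- the product measure as a density
  have hprod : (gaussianReal 0 1).prod (gaussianReal 0 v)
      = (volume.prod volume).withDensity
          (fun p : ℝ × ℝ => gaussianPDF 0 1 p.1 * gaussianPDF 0 v p.2) := by
    refine Measure.prod_eq fun s t hs ht => ?_
    rw [withDensity_apply _ (hs.prod ht), ← Measure.prod_restrict,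
      lintegral_prod_mul (measurable_gaussianPDF _ _).aemeasurable
        (measurable_gaussianPDF _ _).aemeasurable,
      gaussianReal_apply _ one_ne_zero, gaussianReal_apply _ hv]
  have h_measure : ((gaussianReal 0 1).prod (gaussianReal 0 v)) S
      = ∫⁻ p in S, gaussianPDF 0 1 p.1 * gaussianPDF 0 v p.2 := by
    rw [hprod, withDensity_apply _ hS, ← Measure.volume_eq_prod]
  -- the pointwise density lower bound on S'
  have key : ∀ p ∈ S', ENNReal.ofReal (ρ p) ≤ gaussianPDF 0 1 p.1 * gaussianPDF 0 v p.2 := by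
    rintro ⟨e, h⟩ hp
    simp only [hS'_def, Set.mem_setOf_eq] at hp
    have hφA : φ ≤ A := min_le_left A M
    have hφM : φ ≤ M := min_le_right A M
    have hφ2A : φ ^ 2 ≤ A ^ 2 := by nlinarith
    have hφ2M : φ ^ 2 ≤ M ^ 2 := by nlinarith
    have h1 : (e + h) ^ 2 ≤ A ^ 2 := by nlinarith [sq_nonneg h]
    have h2 : h ^ 2 ≤ M ^ 2 := by nlinarith [sq_nonneg (e + h)]
    rw [gaussianPDF, gaussianPDF, ← ENNReal.ofReal_mul (gaussianPDFReal_nonneg _ _ _)]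
    apply ENNReal.ofReal_le_ofReal
    rw [gaussianPDFReal, gaussianPDFReal]
    simp only [NNReal.coe_one, NNReal.coe_mk, mul_one, sub_zero]
    have hsqrt : Real.sqrt (2 * Real.pi * d ^ 2) = Real.sqrt (2 * Real.pi) * d := by
      rw [Real.sqrt_mul (by positivity), Real.sqrt_sq hd.le]
    have hs2 : Real.sqrt (2 * Real.pi) * Real.sqrt (2 * Real.pi) = 2 * Real.pi :=
      Real.mul_self_sqrt (by positivity)
    have hExp : Real.exp (-(A * M)) * Real.exp (-b * ((e + h) ^ 2 + h ^ 2))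
        ≤ Real.exp (-e ^ 2 / 2) * Real.exp (-h ^ 2 / (2 * d ^ 2)) := by
      rw [← Real.exp_add, ← Real.exp_add]
      apply Real.exp_le_exp.2
      rw [hb_def]
      exact expo_bound d A M e h hd hA hM h1 h2
    calc ρ (e, h) = (2 * Real.pi * d)⁻¹
          * (Real.exp (-(A * M)) * Real.exp (-b * ((e + h) ^ 2 + h ^ 2))) := by
            rw [hρ_def, hc0_def]; ring
      _ ≤ (2 * Real.pi * d)⁻¹ * (Real.exp (-e ^ 2 / 2) * Real.exp (-h ^ 2 / (2 * d ^ 2))) :=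
            mul_le_mul_of_nonneg_left hExp (by positivity)
      _ = (Real.sqrt (2 * Real.pi))⁻¹ * Real.exp (-e ^ 2 / 2)
            * ((Real.sqrt (2 * Real.pi * d ^ 2))⁻¹ * Real.exp (-h ^ 2 / (2 * d ^ 2))) := by
            have h2πd : ((2:ℝ) * Real.pi * d)⁻¹
                = (Real.sqrt (2 * Real.pi))⁻¹ * (Real.sqrt (2 * Real.pi))⁻¹ * d⁻¹ := by
              conv_lhs => rw [← hs2]
              ring
            rw [h2πd, hsqrt]; ring
  -- the value of the comparison integral
  have hshear : ∫ p, Set.indicator S' ρ p = ∫ p : ℝ × ℝ, fD p := by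
    rw [Measure.volume_eq_prod] at hint1 hint2 ⊢
    rw [integral_prod_symm _ hint1, integral_prod_symm _ hint2]
    refine integral_congr_ae (.of_forall fun h => ?_)
    calc (∫ e, Set.indicator S' ρ (e, h)) = ∫ e, fD (e + h, h) := by
          refine integral_congr_ae (.of_forall fun e => ?_)
          simp only [hS'_def, hfD_def, hD_def, hρ_def, Set.indicator_apply, Set.mem_setOf_eq]
      _ = ∫ u, fD (u, h) := integral_add_right_eq_self (fun u => fD (u, h)) h
  have hI : ∫ p in S', ρ p = Real.pi * c0 / b * (1 - Real.exp (-b * φ ^ 2)) := by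
    rw [← integral_indicator hS'm, hshear, hfD_def, hD_def, disk_integral b c0 φ hb hφ]
  -- put everything together
  calc ENNReal.ofReal (Real.exp (-(A * M)) * (d / (d ^ 2 + 1)) * (1 - Real.exp (-b * φ ^ 2)))
      = ENNReal.ofReal (∫ p in S', ρ p) := by
        rw [hI]
        congr 1
        rw [hc0_def, hb_def]
        field_simp
    _ = ∫⁻ p in S', ENNReal.ofReal (ρ p) :=
        ofReal_integral_eq_lintegral_ofReal hintS' (ae_of_all _ fun p => by positivity)
    _ ≤ ∫⁻ p in S', gaussianPDF 0 1 p.1 * gaussianPDF 0 v p.2 :=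
        setLIntegral_mono' hS'm key
    _ ≤ ∫⁻ p in S, gaussianPDF 0 1 p.1 * gaussianPDF 0 v p.2 :=
        lintegral_mono_set hsub
    _ = ((gaussianReal 0 1).prod (gaussianReal 0 v)) S := h_measure.symm
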